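/- arXiv:2108.02812 — 3 statements merged into one kernel-verified Lean document; each statement's English description precedes it below -/
import Mathlib

section
/- Let R = ℚ[t, t⁻¹] be the ring of Laurent polynomials over ℚ and let M be a finitely generated R-module such that multiplication by (t − 1) : M → M is surjective. Then M is finite-dimensional as a ℚ-vector space, multiplication by (t − 1) on M is bijective, and consequently 1 is not a root of the characteristic polynomial of the ℚ-linear map M → M given by multiplication by t. -/
open LaurentPolynomial Polynomial

namespace TSubOneAux

noncomputable def ev : LaurentPolynomial ℚ →ₐ[ℚ] ℚ := AddMonoidAlgebra.lift ℚ ℚ ℤ 1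

lemma ev_T (n : ℤ) : ev (T n) = 1 := by
  show AddMonoidAlgebra.lift ℚ ℚ ℤ 1 (AddMonoidAlgebra.single n 1) = 1
  rw [AddMonoidAlgebra.lift_single]
  simp

lemma not_isUnit_T_sub_one : ¬ IsUnit (T 1 - 1 : LaurentPolynomial ℚ) := by
  intro h
  have h2 := h.map ev
  rw [map_sub, ev_T, map_one, sub_self] at h2
  exact h2.ne_zero rfl

variable {M : Type*} [AddCommGroup M] [Module ℚ M]
  [Module (LaurentPolynomial ℚ) M] [IsScalarTower ℚ (LaurentPolynomial ℚ) M]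

lemma exists_monic_ann [Module.Finite (LaurentPolynomial ℚ) M]
    (hsurj : Function.Surjective fun m : M => (T 1 - 1 : LaurentPolynomial ℚ) • m) :
    ∃ q : ℚ[X], q.Monic ∧ q.coeff 0 ≠ 0 ∧
      ∀ m : M, (toLaurent q : LaurentPolynomial ℚ) • m = 0 := by
  obtain ⟨r, hr1, hr0⟩ :=
    Submodule.exists_sub_one_mem_and_smul_eq_zero_of_fg_of_le_smul
      (Ideal.span {(T 1 - 1 : LaurentPolynomial ℚ)}) (⊤ : Submodule (LaurentPolynomial ℚ) M)
      Module.Finite.fg_top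
      (by
        intro m _
        obtain ⟨m', rfl⟩ := hsurj m
        exact Submodule.smul_mem_smul (Ideal.subset_span rfl) trivial)
  have hr : ∀ m : M, r • m = 0 := fun m => hr0 m trivial
  have hrne : r ≠ 0 := by
    rintro rfl
    rw [zero_sub] at hr1
    obtain ⟨c, hc⟩ := Ideal.mem_span_singleton'.mp hr1
    refine not_isUnit_T_sub_one (IsUnit.of_mul_eq_one (-c) ?_)
    rw [mul_comm]
    linear_combination -hc
  obtain ⟨n, p, hp⟩ := r.exists_T_pow
  have hpm : ∀ m : M, (toLaurent p : LaurentPolynomial ℚ) • m = 0 := by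
    intro m; rw [hp, mul_smul]; exact hr _
  have hr' : toLaurent p * T (-(n : ℤ)) = r := by
    rw [hp, mul_assoc, ← T_add]
    simp
  have hpne : p ≠ 0 := by
    rintro rfl
    rw [map_zero, zero_mul] at hr'
    exact hrne hr'.symm
  obtain ⟨p₁, hfac, hndvd⟩ := p.exists_eq_pow_rootMultiplicity_mul_and_not_dvd hpne 0
  simp only [map_zero, sub_zero] at hfac hndvd
  have h1ne : p₁ ≠ 0 := by
    rintro rfl
    rw [mul_zero] at hfac
    exact hpne hfac
  have hc0 : p₁.coeff 0 ≠ 0 := fun h => hndvd (X_dvd_iff.mpr h)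
  have h1ann : ∀ m : M, (toLaurent p₁ : LaurentPolynomial ℚ) • m = 0 := by
    intro m
    have h := hpm m
    rw [hfac, map_mul, toLaurent_X_pow, mul_smul] at h
    have h2 := congrArg (fun z => (T (-(p.rootMultiplicity 0 : ℤ)) : LaurentPolynomial ℚ) • z) h
    simpa only [← mul_smul, ← mul_assoc, ← T_add, neg_add_cancel, T_zero, one_mul, one_smul,
      smul_zero] using h2
  refine ⟨p₁ * Polynomial.C (p₁.leadingCoeff)⁻¹, monic_mul_leadingCoeff_inv h1ne, ?_, ?_⟩
  · rw [coeff_mul_C]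
    exact mul_ne_zero hc0 (inv_ne_zero (leadingCoeff_ne_zero.mpr h1ne))
  · intro m
    rw [map_mul, mul_comm, mul_smul, h1ann, smul_zero]

lemma finite_of_ann [Module.Finite (LaurentPolynomial ℚ) M]
    {q : ℚ[X]} (hq : q.Monic) (hq0 : q.coeff 0 ≠ 0)
    (hann : ∀ m : M, (toLaurent q : LaurentPolynomial ℚ) • m = 0) :
    Module.Finite ℚ M := by
  classical
  obtain ⟨s, hs⟩ := (Module.Finite.fg_top : (⊤ : Submodule (LaurentPolynomial ℚ) M).FG)
  set d := q.natDegree with hd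
  set S : Finset M :=
    ((Finset.range (d + 1)) ×ˢ s).image
      (fun x : ℕ × M => (T (x.1 : ℤ) : LaurentPolynomial ℚ) • x.2) with hS
  set W : Submodule ℚ M := Submodule.span ℚ (S : Set M) with hW
  have hmemS : ∀ i : ℕ, i ≤ d → ∀ m ∈ s, (T (i : ℤ) : LaurentPolynomial ℚ) • m ∈ W := by
    intro i hi m hm
    apply Submodule.subset_span
    exact Finset.mem_coe.mpr (Finset.mem_image.mpr ⟨(i, m),
      Finset.mem_product.mpr ⟨Finset.mem_range.mpr (Nat.lt_succ_of_le hi), hm⟩, rfl⟩)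
  have hA : ∀ (p : ℚ[X]), ∀ m ∈ s, (toLaurent p : LaurentPolynomial ℚ) • m ∈ W := by
    intro p m hm
    have hred : (toLaurent p : LaurentPolynomial ℚ) • m = toLaurent (p %ₘ q) • m := by
      conv_lhs => rw [← p.modByMonic_add_div q]
      rw [map_add, map_mul, add_smul, mul_comm, mul_smul, hann, smul_zero, add_zero]
    rw [hred]
    have hdeg : (p %ₘ q).natDegree < d + 1 :=
      Nat.lt_succ_of_le (natDegree_modByMonic_le p hq)
    rw [(p %ₘ q).as_sum_range' (d + 1) hdeg, map_sum, Finset.sum_smul]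
    apply Submodule.sum_mem
    intro i hi
    rw [Polynomial.toLaurent_C_mul_T, mul_smul, LaurentPolynomial.C_eq_algebraMap, algebraMap_smul]
    exact W.smul_mem _ (hmemS i (Nat.lt_succ_iff.mp (Finset.mem_range.mp hi)) m hm)
  have hT1 : ∀ m ∈ W, (T 1 : LaurentPolynomial ℚ) • m ∈ W := by
    intro m hm
    induction hm using Submodule.span_induction with
    | mem x hx =>
      obtain ⟨⟨i, y⟩, hiy, rfl⟩ := Finset.mem_image.mp (Finset.mem_coe.mp hx)
      obtain ⟨hi, hy⟩ := Finset.mem_product.mp hiy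
      rw [← mul_smul, ← T_add]
      have he : (1 + (i : ℤ)) = ((i + 1 : ℕ) : ℤ) := by push_cast; ring
      rw [he, ← toLaurent_X_pow]
      exact hA _ _ hy
    | zero => simpa using W.zero_mem
    | add x y _ _ hx hy => rw [smul_add]; exact W.add_mem hx hy
    | smul c x _ hx => rw [smul_comm]; exact W.smul_mem c hx
  have hid : (LaurentPolynomial.C (q.coeff 0) * T (-1) : LaurentPolynomial ℚ)
      = T (-1) * toLaurent q - toLaurent q.divX := by
    have hsplit : (toLaurent q : LaurentPolynomial ℚ)
        = T 1 * toLaurent q.divX + LaurentPolynomial.C (q.coeff 0) := by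
      conv_lhs => rw [← X_mul_divX_add q]
      rw [map_add, map_mul, Polynomial.toLaurent_X, Polynomial.toLaurent_C]
    have hT : (T (-1) * T 1 : LaurentPolynomial ℚ) = 1 := by
      rw [← T_add]; norm_num
    rw [hsplit, mul_add, ← mul_assoc, hT, one_mul]
    ring
  have hTn : ∀ m ∈ W, (T (-1) : LaurentPolynomial ℚ) • m ∈ W := by
    intro m hm
    induction hm using Submodule.span_induction with
    | mem x hx =>
      obtain ⟨⟨i, y⟩, hiy, rfl⟩ := Finset.mem_image.mp (Finset.mem_coe.mp hx)
      obtain ⟨hi, hy⟩ := Finset.mem_product.mp hiy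
      rw [← mul_smul, ← T_add]
      rcases Nat.eq_zero_or_pos i with h0 | hpos
      · subst h0
        norm_num
        have key : q.coeff 0 • ((T (-1) : LaurentPolynomial ℚ) • y)
            = -(toLaurent q.divX • y) := by
          rw [← algebraMap_smul (LaurentPolynomial ℚ) (q.coeff 0), ← LaurentPolynomial.C_eq_algebraMap,
            ← mul_smul, hid, sub_smul, mul_smul, hann, smul_zero, zero_sub]
        have : (T (-1) : LaurentPolynomial ℚ) • y
            = (q.coeff 0)⁻¹ • (q.coeff 0 • ((T (-1) : LaurentPolynomial ℚ) • y)) :=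
          (inv_smul_smul₀ hq0 _).symm
        rw [this, key]
        exact W.smul_mem _ (W.neg_mem (hA _ _ hy))
      · have he : (-1 + (i : ℤ)) = ((i - 1 : ℕ) : ℤ) := by
          have : 1 ≤ i := hpos
          push_cast [this]
          ring
        rw [he, ← toLaurent_X_pow]
        exact hA _ _ hy
    | zero => simpa using W.zero_mem
    | add x y _ _ hx hy => rw [smul_add]; exact W.add_mem hx hy
    | smul c x _ hx => rw [smul_comm]; exact W.smul_mem c hx
  have hT : ∀ (n : ℤ), ∀ m ∈ W, (T n : LaurentPolynomial ℚ) • m ∈ W := by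
    intro n
    induction n using Int.induction_on with
    | zero => intro m hm; simpa [T_zero] using hm
    | succ k ih =>
      intro m hm
      rw [show ((k : ℤ) + 1) = 1 + k by ring, T_add, mul_smul]
      exact hT1 _ (ih m hm)
    | pred k ih =>
      intro m hm
      rw [show (-(k : ℤ) - 1) = -1 + -k by ring, T_add, mul_smul]
      exact hTn _ (ih m hm)
  have hR : ∀ (f : LaurentPolynomial ℚ), ∀ m ∈ W, f • m ∈ W := by
    intro f
    induction f using LaurentPolynomial.induction_on' with
    | add p q hp hq =>
      intro m hm
      rw [add_smul]
      exact W.add_mem (hp m hm) (hq m hm)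
    | C_mul_T n a =>
      intro m hm
      rw [mul_smul, LaurentPolynomial.C_eq_algebraMap, algebraMap_smul]
      exact W.smul_mem a (hT n m hm)
  have htop : ∀ m : M, m ∈ W := by
    intro m
    have hm : m ∈ Submodule.span (LaurentPolynomial ℚ) (s : Set M) := by
      rw [hs]; trivial
    induction hm using Submodule.span_induction with
    | mem x hx => simpa [T_zero] using hmemS 0 (Nat.zero_le d) x hx
    | zero => exact W.zero_mem
    | add x y _ _ hx hy => exact W.add_mem hx hy
    | smul r x _ hx => exact hR r x hx
  exact ⟨⟨S, Submodule.eq_top_iff'.mpr htop⟩⟩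

end TSubOneAux

open LaurentPolynomial in
/-- Let `M` be a finitely generated module over the Laurent polynomial ring `ℚ[t,t⁻¹]`
such that multiplication by `t - 1` is surjective on `M`. Then `M` is finite-dimensional
over `ℚ`, multiplication by `t - 1` is bijective on `M`, and `1` is not a root of the
characteristic polynomial of the `ℚ`-linear endomorphism of `M` given by multiplication
by `t`. -/
theorem finiteDimensional_of_tsubone_surjective
    {M : Type*} [AddCommGroup M] [Module ℚ M]
    [Module (LaurentPolynomial ℚ) M] [IsScalarTower ℚ (LaurentPolynomial ℚ) M]
    [Module.Finite (LaurentPolynomial ℚ) M]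
    (hsurj : Function.Surjective fun m : M => (T 1 - 1 : LaurentPolynomial ℚ) • m) :
    FiniteDimensional ℚ M ∧
    Function.Bijective (fun m : M => (T 1 - 1 : LaurentPolynomial ℚ) • m) ∧
    ∀ [FiniteDimensional ℚ M],
      ¬ ((LinearMap.lsmul (LaurentPolynomial ℚ) M (T 1)).restrictScalars ℚ).charpoly.IsRoot 1 := by
  obtain ⟨q, hq, hq0, hann⟩ := TSubOneAux.exists_monic_ann hsurj
  have hfin : Module.Finite ℚ M := TSubOneAux.finite_of_ann hq hq0 hann
  have hinj : Function.Injective fun m : M => (T 1 - 1 : LaurentPolynomial ℚ) • m := by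
    exact OrzechProperty.injective_of_surjective_endomorphism
      (R := LaurentPolynomial ℚ) (LinearMap.lsmul _ M (T 1 - 1)) hsurj
  refine ⟨hfin, ⟨hinj, hsurj⟩, ?_⟩
  intro inst hroot
  set f := ((LinearMap.lsmul (LaurentPolynomial ℚ) M (T 1)).restrictScalars ℚ) with hfdef
  letI : Module.Finite ℚ M := hfin
  let b := Module.Free.chooseBasis ℚ M
  have h1 : f.charpoly.eval 1 = 0 := hroot
  rw [← LinearMap.charpoly_toMatrix f b] at h1
  set A := LinearMap.toMatrix b b f with hA
  have h2 : ((Matrix.charmatrix A).map (Polynomial.evalRingHom 1)).det = 0 := by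
    rw [show A.charmatrix.map ⇑(Polynomial.evalRingHom 1) = (Polynomial.evalRingHom 1).mapMatrix A.charmatrix from (RingHom.mapMatrix_apply _ _).symm, ← RingHom.map_det]
    exact h1
  have h3 : (Matrix.charmatrix A).map (Polynomial.evalRingHom 1) = 1 - A := by
    ext i j
    by_cases hij : i = j
    · subst hij
      simp [Matrix.charmatrix_apply_eq, Matrix.map_apply, Matrix.one_apply, Matrix.sub_apply]
    · simp [Matrix.charmatrix_apply_ne _ _ _ hij, Matrix.map_apply, Matrix.one_apply_ne hij, Matrix.sub_apply]
  have h4 : LinearMap.det ((1 : M →ₗ[ℚ] M) - f) = 0 := by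
    rw [← LinearMap.det_toMatrix b, map_sub, Module.End.one_eq_id, LinearMap.toMatrix_id, ← h3]
    exact h2
  obtain ⟨m, hmker, hm0⟩ := SetLike.exists_of_lt (LinearMap.bot_lt_ker_of_det_eq_zero h4)
  have hm : (T 1 - 1 : LaurentPolynomial ℚ) • m = 0 := by
    have h5 : m - (T 1 : LaurentPolynomial ℚ) • m = 0 := LinearMap.mem_ker.mp hmker
    rw [sub_smul, one_smul]
    rw [sub_eq_zero] at h5 ⊢
    exact h5.symm
  apply hm0
  rw [Submodule.mem_bot]
  apply hinj
  simpa using hm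
end

section
/- Let (R, m) be a commutative local ring with residue field k = R/m and let M be a finitely generated R-module. For every natural number i, the i-th exterior power ⋀ⁱ_R M is nonzero if and only if i ≤ dim_k (k ⊗_R M). -/
/-- An alternating map of degree `i` vanishes if the module is generated by fewer than `i`
elements. -/
private lemma alternatingMap_eq_zero_of_span {R M N : Type*} [CommRing R] [AddCommGroup M]
    [Module R M] [AddCommGroup N] [Module R N] {n i : ℕ} (hn : n < i) (f : Fin n → M)
    (hf : Submodule.span R (Set.range f) = ⊤) (φ : M [⋀^Fin i]→ₗ[R] N) : φ = 0 := by
  ext v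
  have hv : ∀ j, ∃ c : Fin n → R, ∑ t, c t • f t = v j := by
    intro j
    have : v j ∈ Submodule.span R (Set.range f) := hf ▸ Submodule.mem_top
    exact (Submodule.mem_span_range_iff_exists_fun R).mp this
  choose c hc using hv
  have h1 : v = fun j => ∑ t, c j t • f t := funext fun j => (hc j).symm
  rw [AlternatingMap.zero_apply, h1]
  have h2 : φ (fun j => ∑ t, c j t • f t) =
      ∑ r : Fin i → Fin n, φ fun j => c j (r j) • f (r j) :=
    φ.toMultilinearMap.map_sum (fun j t => c j t • f t)
  rw [h2]
  refine Finset.sum_eq_zero fun r _ => ?_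
  have h3 : φ (fun j => c j (r j) • f (r j)) = (∏ j, c j (r j)) • φ fun j => f (r j) :=
    φ.toMultilinearMap.map_smul_univ (fun j => c j (r j)) fun j => f (r j)
  obtain ⟨j₁, j₂, hne, heq⟩ := Fintype.exists_ne_map_eq_of_card_lt r (by simpa using hn)
  rw [h3, φ.map_eq_zero_of_eq _ (by rw [heq]) hne, smul_zero]

open TensorProduct in
/-- For a finitely generated module `M` over a commutative local ring `(R, m)` with residue
field `k = R/m`, the `i`-th exterior power `⋀[R]^i M` is nonzero if and only if
`i ≤ dim_k (k ⊗[R] M)`. -/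
theorem exteriorPower_nontrivial_iff
    {R M : Type*} [CommRing R] [IsLocalRing R] [AddCommGroup M] [Module R M]
    [Module.Finite R M] (i : ℕ) :
    Nontrivial (⋀[R]^i M) ↔
      i ≤ Module.finrank (IsLocalRing.ResidueField R)
            (IsLocalRing.ResidueField R ⊗[R] M) := by
  classical
  set k := IsLocalRing.ResidueField R
  set n := Module.finrank k (k ⊗[R] M) with hn
  -- a basis of `k ⊗ M` and lifts to `M`
  let b : Module.Basis (Fin n) k (k ⊗[R] M) := Module.finBasis k (k ⊗[R] M)
  have hsurj : Function.Surjective (TensorProduct.mk R k M 1) :=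
    TensorProduct.mk_surjective R M k Ideal.Quotient.mk_surjective
  choose f hf using fun j => hsurj (b j)
  have hspan : Submodule.span R (Set.range f) = ⊤ :=
    IsLocalRing.span_eq_top_of_tmul_eq_basis (R := R) f b hf
  constructor
  · intro H
    by_contra h
    push_neg at h
    have hz : (ExteriorAlgebra.ιMulti R i (M := M)) = 0 :=
      alternatingMap_eq_zero_of_span h f hspan _
    have hbot : (⋀[R]^i M) = ⊥ := by
      rw [← ExteriorAlgebra.ιMulti_span_fixedDegree, eq_bot_iff, Submodule.span_le]
      rintro _ ⟨v, rfl⟩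
      simp [hz]
    rw [Submodule.nontrivial_iff_ne_bot] at H
    exact H hbot
  · intro hi
    -- construct an alternating form detecting `ιMulti R i (f ∘ castLE)`
    let ψ : (k ⊗[R] M) [⋀^Fin i]→ₗ[k] k :=
      ((Pi.basisFun k (Fin i)).det).compLinearMap
        ((LinearMap.funLeft k k (Fin.castLE hi)) ∘ₗ b.equivFun.toLinearMap)
    have hψ : ψ (fun j => b (Fin.castLE hi j)) = 1 := by
      have : (fun l => (LinearMap.funLeft k k (Fin.castLE hi) ∘ₗ b.equivFun.toLinearMap)
          (b (Fin.castLE hi l))) = ⇑(Pi.basisFun k (Fin i)) := by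
        funext l
        ext l'
        simp [LinearMap.funLeft, Module.Basis.equivFun_self, Finsupp.single_apply, Pi.single_apply,
          Fin.castLE_inj, eq_comm]
      simp only [ψ, AlternatingMap.compLinearMap_apply]
      rw [this, Module.Basis.det_self]
    -- turn it into an `R`-alternating map on `M`
    let φ : M [⋀^Fin i]→ₗ[R] k :=
      { toMultilinearMap := (ψ.toMultilinearMap.restrictScalars R).compLinearMap
          fun _ => TensorProduct.mk R k M 1
        map_eq_zero_of_eq' := by
          intro v j₁ j₂ he hne
          exact ψ.map_eq_zero_of_eq (fun j => (1 : k) ⊗ₜ v j) (by rw [he]) hne }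
    have hφ : φ (fun j => f (Fin.castLE hi j)) = 1 := by
      have : (fun j => (1 : k) ⊗ₜ[R] f (Fin.castLE hi j)) =
          fun j => b (Fin.castLE hi j) := funext fun j => hf (Fin.castLE hi j)
      show ψ (fun j => (1 : k) ⊗ₜ f (Fin.castLE hi j)) = 1
      rw [this, hψ]
    -- the corresponding element of the exterior power is nonzero
    have hne : ExteriorAlgebra.ιMulti R i (fun j => f (Fin.castLE hi j)) ≠ 0 := by
      intro h0
      have := congrArg (ExteriorAlgebra.liftAlternating
        (Function.update (0 : ∀ j, M [⋀^Fin j]→ₗ[R] k) i φ)) h0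
      rw [ExteriorAlgebra.liftAlternating_apply_ιMulti, Function.update_self, hφ, map_zero] at this
      exact one_ne_zero this
    rw [Submodule.nontrivial_iff_ne_bot, Submodule.ne_bot_iff]
    exact ⟨ExteriorAlgebra.ιMulti R i (fun j => f (Fin.castLE hi j)),
      ExteriorAlgebra.ιMulti_range R i ⟨_, rfl⟩, hne⟩
end

section
/- Let d ≥ 2 be an integer and let (λ₀, λ₁, λ₂) ∈ ℂ³ with (λ₀, λ₁, λ₂) ≠ (0,0,0). Set F = λ₀·x₀·(x₁^d − x₂^d) + λ₁·x₁·(x₂^d − x₀^d) + λ₂·x₂·(x₀^d − x₁^d) ∈ ℂ[x₀, x₁, x₂]. Then there exists (a₀, a₁, a₂) ∈ ℂ³ with (a₀, a₁, a₂) ≠ (0,0,0) at which F and all three partial derivatives ∂F/∂x₀, ∂F/∂x₁, ∂F/∂x₂ vanish if and only if (λ₀^d − λ₁^d)·(λ₁^d − λ₂^d)·(λ₂^d − λ₀^d) = 0. -/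
private def RupSing (d : ℕ) (l0 l1 l2 : ℂ) : Prop :=
  ∃ a0 a1 a2 : ℂ, ¬(a0 = 0 ∧ a1 = 0 ∧ a2 = 0) ∧
    l0*a0*(a1^d - a2^d) + l1*a1*(a2^d - a0^d) + l2*a2*(a0^d - a1^d) = 0 ∧
    l0*(a1^d - a2^d) - d*l1*a1*a0^(d-1) + d*l2*a2*a0^(d-1) = 0 ∧
    d*l0*a0*a1^(d-1) + l1*(a2^d - a0^d) - d*l2*a2*a1^(d-1) = 0 ∧
    -(d*l0*a0*a2^(d-1)) + d*l1*a1*a2^(d-1) + l2*(a0^d - a1^d) = 0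

private lemma rupSing_cyc {d : ℕ} {l0 l1 l2 : ℂ} (h : RupSing d l0 l1 l2) :
    RupSing d l1 l2 l0 := by
  obtain ⟨a0, a1, a2, ha, hf, h0, h1, h2⟩ := h
  exact ⟨a1, a2, a0, by tauto, by linear_combination hf, by linear_combination h1,
    by linear_combination h2, by linear_combination h0⟩

private lemma rupSing_of_pow_eq (d : ℕ) (hd : 2 ≤ d) (l0 l1 l2 : ℂ)
    (hpow : l0 ^ d = l1 ^ d) : RupSing d l0 l1 l2 := by
  have hd0 : d ≠ 0 := by omega
  by_cases h : l0 = 0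
  · have h1 : l1 = 0 := by
      have : l1 ^ d = 0 := by rw [← hpow, h, zero_pow hd0]
      exact pow_eq_zero_iff hd0 |>.mp this
    refine ⟨1, 1, 0, by simp, ?_, ?_, ?_, ?_⟩ <;> simp [h, h1, zero_pow hd0]
  · set c : ℂ := l1 / l0 with hc_def
    have hc : c ^ d = 1 := by
      rw [hc_def, div_pow, ← hpow, div_self (pow_ne_zero d h)]
    have hl1 : l1 = c * l0 := by rw [hc_def, div_mul_cancel₀ l1 h]
    have hc1 : c ^ (d - 1) * c = 1 := by
      rw [← pow_succ]
      have : d - 1 + 1 = d := by omega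
      rw [this, hc]
    -- find a root s of l0 * s^d - d*l2*c^(d-1)*s + l0*(d-1) = 0
    set P : Polynomial ℂ := Polynomial.C l0 * Polynomial.X ^ d +
      (Polynomial.C (-((d : ℂ) * l2 * c ^ (d - 1))) * Polynomial.X +
        Polynomial.C (l0 * ((d : ℂ) - 1))) with hP
    have hdegP : P.degree = d := by
      rw [hP]
      rw [Polynomial.degree_add_eq_left_of_degree_lt, Polynomial.degree_C_mul_X_pow d h]
      · rw [Polynomial.degree_C_mul_X_pow d h]
        refine lt_of_le_of_lt Polynomial.degree_linear_le ?_
        exact_mod_cast Nat.one_lt_cast.mpr (by omega)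
    obtain ⟨s, hsroot⟩ := Complex.exists_root (f := P) (by
      rw [hdegP]; exact_mod_cast Nat.cast_pos.mpr (by omega))
    have hs : l0 * s ^ d - (d : ℂ) * l2 * c ^ (d - 1) * s + l0 * ((d : ℂ) - 1) = 0 := by
      have := hsroot
      simp only [Polynomial.IsRoot, hP, Polynomial.eval_add, Polynomial.eval_mul,
        Polynomial.eval_pow, Polynomial.eval_C, Polynomial.eval_X] at this
      linear_combination this
    refine ⟨c, 1, s, by simp, ?_, ?_, ?_, ?_⟩
    · linear_combination (s ^ d - c ^ d) * hl1 + (l2 * s - c * l0) * hc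
    · linear_combination (-1 : ℂ) * hs - (d : ℂ) * c ^ (d - 1) * hl1 - (d : ℂ) * l0 * hc1
    · linear_combination (s ^ d - c ^ d) * hl1 + c * hs - c * l0 * hc + (d : ℂ) * l2 * s * hc1
    · linear_combination (d : ℂ) * s ^ (d - 1) * hl1 + l2 * hc

/-- forward direction, case where the first coordinate vanishes -/
private lemma rup_fwd_zero (d : ℕ) (hd : 2 ≤ d) (l0 l1 l2 a0 a1 a2 : ℂ)
    (ha0 : a0 = 0) (ha : ¬(a0 = 0 ∧ a1 = 0 ∧ a2 = 0))
    (e0 : l0*(a1^d - a2^d) - d*l1*a1*a0^(d-1) + d*l2*a2*a0^(d-1) = 0)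
    (e1 : d*l0*a0*a1^(d-1) + l1*(a2^d - a0^d) - d*l2*a2*a1^(d-1) = 0)
    (e2 : -(d*l0*a0*a2^(d-1)) + d*l1*a1*a2^(d-1) + l2*(a0^d - a1^d) = 0) :
    (l0 ^ d - l1 ^ d) * (l1 ^ d - l2 ^ d) * (l2 ^ d - l0 ^ d) = 0 := by
  have hd0 : d ≠ 0 := by omega
  have hz1 : a0 ^ (d - 1) = 0 := by rw [ha0, zero_pow (by omega : d - 1 ≠ 0)]
  have hz2 : a0 ^ d = 0 := by rw [ha0, zero_pow hd0]
  have D0 : l0 * (a1 ^ d - a2 ^ d) = 0 := by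
    linear_combination e0 + ((d : ℂ) * l1 * a1 - (d : ℂ) * l2 * a2) * hz1
  have D1 : l1 * a2 ^ d - (d : ℂ) * l2 * a2 * a1 ^ (d - 1) = 0 := by
    linear_combination e1 + l1 * hz2 - (d : ℂ) * l0 * a1 ^ (d - 1) * ha0
  have D2 : (d : ℂ) * l1 * a1 * a2 ^ (d - 1) - l2 * a1 ^ d = 0 := by
    linear_combination e2 + (d : ℂ) * l0 * a2 ^ (d - 1) * ha0 - l2 * hz2
  by_cases h1 : a1 = 0
  · have h2 : a2 ≠ 0 := by tauto
    have hr : a2 ^ d ≠ 0 := pow_ne_zero _ h2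
    have hl0 : l0 = 0 := by
      have : l0 * (-(a2 ^ d)) = 0 := by
        linear_combination D0 - l0 * (by rw [h1, zero_pow hd0] : a1 ^ d = (0:ℂ))
      rcases mul_eq_zero.mp this with h | h
      · exact h
      · exact absurd (neg_eq_zero.mp h) hr
    have hl1 : l1 = 0 := by
      have : l1 * a2 ^ d = 0 := by
        linear_combination D1 + (d : ℂ) * l2 * a2 * (by rw [h1, zero_pow (by omega : d - 1 ≠ 0)] : a1 ^ (d-1) = (0:ℂ))
      rcases mul_eq_zero.mp this with h | h
      · exact h
      · exact absurd h hr
    have : l0 ^ d - l1 ^ d = 0 := by rw [hl0, hl1, sub_self]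
    linear_combination ((l1 ^ d - l2 ^ d) * (l2 ^ d - l0 ^ d)) * this
  · by_cases h2 : a2 = 0
    · have hq : a1 ^ d ≠ 0 := pow_ne_zero _ h1
      have hl0 : l0 = 0 := by
        have : l0 * a1 ^ d = 0 := by
          linear_combination D0 + l0 * (by rw [h2, zero_pow hd0] : a2 ^ d = (0:ℂ))
        rcases mul_eq_zero.mp this with h | h
        · exact h
        · exact absurd h hq
      have hl2 : l2 = 0 := by
        have : l2 * a1 ^ d = 0 := by
          linear_combination -D2 + (d : ℂ) * l1 * a1 * (by rw [h2, zero_pow (by omega : d - 1 ≠ 0)] : a2 ^ (d-1) = (0:ℂ))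
        rcases mul_eq_zero.mp this with h | h
        · exact h
        · exact absurd h hq
      have : l2 ^ d - l0 ^ d = 0 := by rw [hl0, hl2, sub_self]
      linear_combination ((l0 ^ d - l1 ^ d) * (l1 ^ d - l2 ^ d)) * this
    · -- a1 ≠ 0 and a2 ≠ 0
      have hq : a1 ^ d ≠ 0 := pow_ne_zero _ h1
      have hr : a2 ^ d ≠ 0 := pow_ne_zero _ h2
      have hA : a1 ^ (d - 1) * a1 = a1 ^ d := by
        rw [← pow_succ]; congr 1; omega
      have hB : a2 ^ (d - 1) * a2 = a2 ^ d := by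
        rw [← pow_succ]; congr 1; omega
      have key : l1 * l2 * a1 ^ d * a2 ^ d * (1 - (d : ℂ) ^ 2) = 0 := by
        linear_combination (l2 * a1 ^ d) * D1 - ((d : ℂ) * l2 * a2 * a1 ^ (d - 1)) * D2 +
          (d : ℂ) ^ 2 * l1 * l2 * (a2 ^ (d - 1) * a2) * hA +
          (d : ℂ) ^ 2 * l1 * l2 * a1 ^ d * hB
      have hdd : (1 : ℂ) - (d : ℂ) ^ 2 ≠ 0 := by
        intro h
        have h' : ((d ^ 2 : ℕ) : ℂ) = ((1 : ℕ) : ℂ) := by push_cast; linear_combination -h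
        have : d ^ 2 = 1 := Nat.cast_injective h'
        nlinarith
      have hl12 : l1 * l2 = 0 := by
        rcases mul_eq_zero.mp key with h | h
        · rcases mul_eq_zero.mp h with h | h
          · rcases mul_eq_zero.mp h with h | h
            · exact h
            · exact absurd h hq
          · exact absurd h hr
        · exact absurd h hdd
      have hl1l2 : l1 = 0 ∧ l2 = 0 := by
        rcases mul_eq_zero.mp hl12 with h | h
        · refine ⟨h, ?_⟩
          have : l2 * a1 ^ d = 0 := by linear_combination -D2 + (d:ℂ)*a1*a2^(d-1)*h
          rcases mul_eq_zero.mp this with h' | h'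
          · exact h'
          · exact absurd h' hq
        · refine ⟨?_, h⟩
          have : l1 * a2 ^ d = 0 := by linear_combination D1 + (d:ℂ)*a2*a1^(d-1)*h
          rcases mul_eq_zero.mp this with h' | h'
          · exact h'
          · exact absurd h' hr
      have : l1 ^ d - l2 ^ d = 0 := by rw [hl1l2.1, hl1l2.2, sub_self]
      linear_combination ((l0 ^ d - l1 ^ d) * (l2 ^ d - l0 ^ d)) * this

/-- forward direction -/
private lemma rup_fwd (d : ℕ) (hd : 2 ≤ d) (l0 l1 l2 a0 a1 a2 : ℂ)
    (hl : ¬(l0 = 0 ∧ l1 = 0 ∧ l2 = 0)) (ha : ¬(a0 = 0 ∧ a1 = 0 ∧ a2 = 0))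
    (e0 : l0*(a1^d - a2^d) - d*l1*a1*a0^(d-1) + d*l2*a2*a0^(d-1) = 0)
    (e1 : d*l0*a0*a1^(d-1) + l1*(a2^d - a0^d) - d*l2*a2*a1^(d-1) = 0)
    (e2 : -(d*l0*a0*a2^(d-1)) + d*l1*a1*a2^(d-1) + l2*(a0^d - a1^d) = 0) :
    (l0 ^ d - l1 ^ d) * (l1 ^ d - l2 ^ d) * (l2 ^ d - l0 ^ d) = 0 := by
  by_cases h0 : a0 = 0
  · exact rup_fwd_zero d hd l0 l1 l2 a0 a1 a2 h0 ha e0 e1 e2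
  by_cases h1 : a1 = 0
  · have := rup_fwd_zero d hd l1 l2 l0 a1 a2 a0 h1 (by tauto)
      (by linear_combination e1) (by linear_combination e2) (by linear_combination e0)
    linear_combination this
  by_cases h2 : a2 = 0
  · have := rup_fwd_zero d hd l2 l0 l1 a2 a0 a1 h2 (by tauto)
      (by linear_combination e2) (by linear_combination e0) (by linear_combination e1)
    linear_combination this
  -- all coordinates nonzero
  have hd0 : d ≠ 0 := by omega
  have hdC : (d : ℂ) ≠ 0 := Nat.cast_ne_zero.mpr hd0
  have hp : a0 ^ d ≠ 0 := pow_ne_zero _ h0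
  have hq : a1 ^ d ≠ 0 := pow_ne_zero _ h1
  have hr : a2 ^ d ≠ 0 := pow_ne_zero _ h2
  have hA0 : a0 ^ (d - 1) * a0 = a0 ^ d := by rw [← pow_succ]; congr 1; omega
  have hA1 : a1 ^ (d - 1) * a1 = a1 ^ d := by rw [← pow_succ]; congr 1; omega
  have hA2 : a2 ^ (d - 1) * a2 = a2 ^ d := by rw [← pow_succ]; congr 1; omega
  have E1 : l0*a0*(a1^d - a2^d) - (d:ℂ)*(a0^d)*(l1*a1 - l2*a2) = 0 := by
    linear_combination a0 * e0 + (d:ℂ)*(l1*a1 - l2*a2) * hA0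
  have E2 : l1*a1*(a2^d - a0^d) - (d:ℂ)*(a1^d)*(l2*a2 - l0*a0) = 0 := by
    linear_combination a1 * e1 + (d:ℂ)*(l2*a2 - l0*a0) * hA1
  have E3 : l2*a2*(a0^d - a1^d) - (d:ℂ)*(a2^d)*(l0*a0 - l1*a1) = 0 := by
    linear_combination a2 * e2 + (d:ℂ)*(l0*a0 - l1*a1) * hA2
  have hdd : (1 : ℂ) - (d : ℂ) ^ 2 ≠ 0 := by
    intro h
    have h' : ((d ^ 2 : ℕ) : ℂ) = ((1 : ℕ) : ℂ) := by push_cast; linear_combination -h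
    have : d ^ 2 = 1 := Nat.cast_injective h'
    nlinarith
  have hdet : a0 ^ d = a1 ^ d ∨ a1 ^ d = a2 ^ d ∨ a2 ^ d = a0 ^ d := by
    by_contra hcon
    push_neg at hcon
    obtain ⟨n1, n2, n3⟩ := hcon
    have f1 : a0 ^ d - a1 ^ d ≠ 0 := sub_ne_zero.mpr n1
    have f2 : a1 ^ d - a2 ^ d ≠ 0 := sub_ne_zero.mpr n2
    have f3 : a2 ^ d - a0 ^ d ≠ 0 := sub_ne_zero.mpr n3
    have hDET : ((1:ℂ) - (d:ℂ)^2) * (a0^d - a1^d) * (a1^d - a2^d) * (a2^d - a0^d) ≠ 0 :=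
      mul_ne_zero (mul_ne_zero (mul_ne_zero hdd f1) f2) f3
    have hu : (l0 * a0) * (((1:ℂ) - (d:ℂ)^2) * (a0^d - a1^d) * (a1^d - a2^d) * (a2^d - a0^d)) = 0 := by
      linear_combination ((a2^d - a0^d)*(a0^d - a1^d) + (d:ℂ)^2*a1^d*a2^d) * E1 +
        ((d:ℂ)*a0^d*(a0^d - a1^d) + (d:ℂ)^2*a0^d*a2^d) * E2 +
        ((d:ℂ)^2*a0^d*a1^d + (d:ℂ)*a0^d*(a0^d - a2^d)) * E3
    have hv : (l1 * a1) * (((1:ℂ) - (d:ℂ)^2) * (a0^d - a1^d) * (a1^d - a2^d) * (a2^d - a0^d)) = 0 := by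
      linear_combination ((a0^d - a1^d)*(a1^d - a2^d) + (d:ℂ)^2*a2^d*a0^d) * E2 +
        ((d:ℂ)*a1^d*(a1^d - a2^d) + (d:ℂ)^2*a1^d*a0^d) * E3 +
        ((d:ℂ)^2*a1^d*a2^d + (d:ℂ)*a1^d*(a1^d - a0^d)) * E1
    have hw : (l2 * a2) * (((1:ℂ) - (d:ℂ)^2) * (a0^d - a1^d) * (a1^d - a2^d) * (a2^d - a0^d)) = 0 := by
      linear_combination ((a1^d - a2^d)*(a2^d - a0^d) + (d:ℂ)^2*a0^d*a1^d) * E3 +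
        ((d:ℂ)*a2^d*(a2^d - a0^d) + (d:ℂ)^2*a2^d*a1^d) * E1 +
        ((d:ℂ)^2*a2^d*a0^d + (d:ℂ)*a2^d*(a2^d - a1^d)) * E2
    have hl0 : l0 = 0 := by
      rcases mul_eq_zero.mp hu with h | h
      · rcases mul_eq_zero.mp h with h | h
        · exact h
        · exact absurd h h0
      · exact absurd h hDET
    have hl1 : l1 = 0 := by
      rcases mul_eq_zero.mp hv with h | h
      · rcases mul_eq_zero.mp h with h | h
        · exact h
        · exact absurd h h1
      · exact absurd h hDET
    have hl2 : l2 = 0 := by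
      rcases mul_eq_zero.mp hw with h | h
      · rcases mul_eq_zero.mp h with h | h
        · exact h
        · exact absurd h h2
      · exact absurd h hDET
    exact hl ⟨hl0, hl1, hl2⟩
  rcases hdet with hpq | hqr | hrp
  · -- a0^d = a1^d : get l0*a0 = l1*a1
    have h9 : (d:ℂ) * a2^d * (l0*a0 - l1*a1) = 0 := by
      linear_combination (-1:ℂ) * E3 + l2 * a2 * hpq
    have huv : l0 * a0 = l1 * a1 := by
      rcases mul_eq_zero.mp h9 with h | h
      · rcases mul_eq_zero.mp h with h | h
        · exact absurd h hdC
        · exact absurd h hr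
      · exact sub_eq_zero.mp h
    have hp9 : (l0 * a0) ^ d = (l1 * a1) ^ d := by rw [huv]
    have : (l0 ^ d - l1 ^ d) * a0 ^ d = 0 := by
      rw [mul_pow, mul_pow] at hp9
      linear_combination hp9 - l1 ^ d * hpq
    have hfac : l0 ^ d - l1 ^ d = 0 := by
      rcases mul_eq_zero.mp this with h | h
      · exact h
      · exact absurd h hp
    linear_combination ((l1 ^ d - l2 ^ d) * (l2 ^ d - l0 ^ d)) * hfac
  · have h9 : (d:ℂ) * a0^d * (l1*a1 - l2*a2) = 0 := by
      linear_combination (-1:ℂ) * E1 + l0 * a0 * hqr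
    have huv : l1 * a1 = l2 * a2 := by
      rcases mul_eq_zero.mp h9 with h | h
      · rcases mul_eq_zero.mp h with h | h
        · exact absurd h hdC
        · exact absurd h hp
      · exact sub_eq_zero.mp h
    have hp9 : (l1 * a1) ^ d = (l2 * a2) ^ d := by rw [huv]
    have : (l1 ^ d - l2 ^ d) * a1 ^ d = 0 := by
      rw [mul_pow, mul_pow] at hp9
      linear_combination hp9 - l2 ^ d * hqr
    have hfac : l1 ^ d - l2 ^ d = 0 := by
      rcases mul_eq_zero.mp this with h | h
      · exact h
      · exact absurd h hq
    linear_combination ((l0 ^ d - l1 ^ d) * (l2 ^ d - l0 ^ d)) * hfac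
  · have h9 : (d:ℂ) * a1^d * (l2*a2 - l0*a0) = 0 := by
      linear_combination (-1:ℂ) * E2 + l1 * a1 * hrp
    have huv : l2 * a2 = l0 * a0 := by
      rcases mul_eq_zero.mp h9 with h | h
      · rcases mul_eq_zero.mp h with h | h
        · exact absurd h hdC
        · exact absurd h hq
      · exact sub_eq_zero.mp h
    have hp9 : (l2 * a2) ^ d = (l0 * a0) ^ d := by rw [huv]
    have : (l2 ^ d - l0 ^ d) * a2 ^ d = 0 := by
      rw [mul_pow, mul_pow] at hp9
      linear_combination hp9 - l0 ^ d * hrp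
    have hfac : l2 ^ d - l0 ^ d = 0 := by
      rcases mul_eq_zero.mp this with h | h
      · exact h
      · exact absurd h hr
    linear_combination ((l0 ^ d - l1 ^ d) * (l1 ^ d - l2 ^ d)) * hfac

open MvPolynomial in
private lemma rup_eval_F (d : ℕ) (l : Fin 3 → ℂ) (a : Fin 3 → ℂ) :
    eval a (C (l 0) * X 0 * (X 1 ^ d - X 2 ^ d)
            + C (l 1) * X 1 * (X 2 ^ d - X 0 ^ d)
            + C (l 2) * X 2 * (X 0 ^ d - X 1 ^ d)) =
      l 0 * a 0 * (a 1 ^ d - a 2 ^ d) + l 1 * a 1 * (a 2 ^ d - a 0 ^ d)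
        + l 2 * a 2 * (a 0 ^ d - a 1 ^ d) := by
  simp [eval_C, eval_X]

open MvPolynomial in
private lemma rup_eval_pd0 (d : ℕ) (l : Fin 3 → ℂ) (a : Fin 3 → ℂ) :
    eval a (pderiv 0 (C (l 0) * X 0 * (X 1 ^ d - X 2 ^ d)
            + C (l 1) * X 1 * (X 2 ^ d - X 0 ^ d)
            + C (l 2) * X 2 * (X 0 ^ d - X 1 ^ d))) =
      l 0 * (a 1 ^ d - a 2 ^ d) - d * l 1 * a 1 * a 0 ^ (d-1)
        + d * l 2 * a 2 * a 0 ^ (d-1) := by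
  simp only [map_add, map_sub, map_mul, pderiv_mul, pderiv_pow, pderiv_C, pderiv_X_self,
    pderiv_X_of_ne (by decide : (1:Fin 3) ≠ 0), pderiv_X_of_ne (by decide : (2:Fin 3) ≠ 0),
    eval_C, eval_X, eval_mul, eval_add, eval_sub, eval_pow, map_natCast, map_zero, map_one]
  ring

open MvPolynomial in
private lemma rup_eval_pd1 (d : ℕ) (l : Fin 3 → ℂ) (a : Fin 3 → ℂ) :
    eval a (pderiv 1 (C (l 0) * X 0 * (X 1 ^ d - X 2 ^ d)
            + C (l 1) * X 1 * (X 2 ^ d - X 0 ^ d)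
            + C (l 2) * X 2 * (X 0 ^ d - X 1 ^ d))) =
      d * l 0 * a 0 * a 1 ^ (d-1) + l 1 * (a 2 ^ d - a 0 ^ d)
        - d * l 2 * a 2 * a 1 ^ (d-1) := by
  simp only [map_add, map_sub, map_mul, pderiv_mul, pderiv_pow, pderiv_C, pderiv_X_self,
    pderiv_X_of_ne (by decide : (0:Fin 3) ≠ 1), pderiv_X_of_ne (by decide : (2:Fin 3) ≠ 1),
    eval_C, eval_X, eval_mul, eval_add, eval_sub, eval_pow, map_natCast, map_zero, map_one]
  ring

open MvPolynomial in
private lemma rup_eval_pd2 (d : ℕ) (l : Fin 3 → ℂ) (a : Fin 3 → ℂ) :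
    eval a (pderiv 2 (C (l 0) * X 0 * (X 1 ^ d - X 2 ^ d)
            + C (l 1) * X 1 * (X 2 ^ d - X 0 ^ d)
            + C (l 2) * X 2 * (X 0 ^ d - X 1 ^ d))) =
      -(↑d * l 0 * a 0 * a 2 ^ (d-1)) + d * l 1 * a 1 * a 2 ^ (d-1)
        + l 2 * (a 0 ^ d - a 1 ^ d) := by
  simp only [map_add, map_sub, map_mul, pderiv_mul, pderiv_pow, pderiv_C, pderiv_X_self,
    pderiv_X_of_ne (by decide : (0:Fin 3) ≠ 2), pderiv_X_of_ne (by decide : (1:Fin 3) ≠ 2),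
    eval_C, eval_X, eval_mul, eval_add, eval_sub, eval_pow, map_natCast, map_zero, map_one]
  ring

open MvPolynomial in
/-- For `d ≥ 2` and `(λ₀, λ₁, λ₂) ≠ (0,0,0)`, the Ruppert polynomial
`F = λ₀ x₀ (x₁^d − x₂^d) + λ₁ x₁ (x₂^d − x₀^d) + λ₂ x₂ (x₀^d − x₁^d)` has a nonzero common
zero with all three of its partial derivatives if and only if
`(λ₀^d − λ₁^d)(λ₁^d − λ₂^d)(λ₂^d − λ₀^d) = 0`. -/
theorem ruppert_singular_iff (d : ℕ) (hd : 2 ≤ d) (l : Fin 3 → ℂ) (hl : l ≠ 0)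
    (F : MvPolynomial (Fin 3) ℂ)
    (hF : F = C (l 0) * X 0 * (X 1 ^ d - X 2 ^ d)
            + C (l 1) * X 1 * (X 2 ^ d - X 0 ^ d)
            + C (l 2) * X 2 * (X 0 ^ d - X 1 ^ d)) :
    (∃ a : Fin 3 → ℂ, a ≠ 0 ∧ eval a F = 0 ∧ ∀ i : Fin 3, eval a (pderiv i F) = 0) ↔
      ((l 0) ^ d - (l 1) ^ d) * ((l 1) ^ d - (l 2) ^ d) * ((l 2) ^ d - (l 0) ^ d) = 0 := by
  have hl' : ¬(l 0 = 0 ∧ l 1 = 0 ∧ l 2 = 0) := by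
    rintro ⟨h0, h1, h2⟩
    apply hl
    funext i
    fin_cases i <;> assumption
  constructor
  · rintro ⟨a, ha, hf, hder⟩
    have ha' : ¬(a 0 = 0 ∧ a 1 = 0 ∧ a 2 = 0) := by
      rintro ⟨h0, h1, h2⟩
      apply ha
      funext i
      fin_cases i <;> assumption
    have e0 := hder 0
    have e1 := hder 1
    have e2 := hder 2
    rw [hF, rup_eval_pd0] at e0
    rw [hF, rup_eval_pd1] at e1
    rw [hF, rup_eval_pd2] at e2
    exact rup_fwd d hd (l 0) (l 1) (l 2) (a 0) (a 1) (a 2) hl' ha' e0 e1 e2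
  · intro hprod
    have hsing : RupSing d (l 0) (l 1) (l 2) := by
      rcases mul_eq_zero.mp hprod with h | h
      · rcases mul_eq_zero.mp h with h | h
        · exact rupSing_of_pow_eq d hd _ _ _ (sub_eq_zero.mp h)
        · exact rupSing_cyc (rupSing_cyc
            (rupSing_of_pow_eq d hd (l 1) (l 2) (l 0) (sub_eq_zero.mp h)))
      · exact rupSing_cyc (rupSing_of_pow_eq d hd (l 2) (l 0) (l 1) (sub_eq_zero.mp h))
    obtain ⟨a0, a1, a2, ha, hf, h0, h1, h2⟩ := hsing
    refine ⟨![a0, a1, a2], ?_, ?_, ?_⟩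
    · intro h
      apply ha
      refine ⟨?_, ?_, ?_⟩
      · have := congrFun h 0; simpa using this
      · have := congrFun h 1; simpa using this
      · have := congrFun h 2; simpa using this
    · rw [hF, rup_eval_F]
      simpa using hf
    · intro i
      fin_cases i
      · show eval ![a0, a1, a2] (pderiv 0 F) = 0
        rw [hF, rup_eval_pd0]; simpa using h0
      · show eval ![a0, a1, a2] (pderiv 1 F) = 0
        rw [hF, rup_eval_pd1]; simpa using h1
      · show eval ![a0, a1, a2] (pderiv 2 F) = 0
        rw [hF, rup_eval_pd2]; simpa using h2
end
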